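/- Let G ~ G_{n,p,d} be any d-dependent random graph distribution with p > 0, and let k ≥ 2. Then the expected number of k-cliques of G (i.e., k-element vertex subsets all of whose C(k,2) pairs are present edges) is at most C(n,k)·p^{C(k,2)/(d+1)}, where C(k,2) = k(k−1)/2 and the exponent C(k,2)/(d+1) is a real number. -/

import Mathlib

open MeasureTheory ProbabilityTheory Filter

abbrev EdgeIdx (n : ℕ) := {e : Sym2 (Fin n) // ¬ e.IsDiag}

structure DepRandomGraph (n : ℕ) (p : ℝ) (d : ℕ) where
  Ω : Type
  m : MeasurableSpace Ω
  μ : @MeasureTheory.Measure Ω m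
  isProb : @MeasureTheory.IsProbabilityMeasure Ω m μ
  X : EdgeIdx n → Ω → Bool
  meas : ∀ e, @Measurable Ω Bool m ⊤ (X e)
  probX : ∀ e, μ {ω | X e ω = true} = ENNReal.ofReal p
  D : SimpleGraph (EdgeIdx n)
  degBound : ∀ e, (D.neighborSet e).ncard ≤ d
  indep : ∀ e, @ProbabilityTheory.Indep Ω
      (MeasurableSpace.comap (X e) ⊤)
      (⨆ f ∈ {f : EdgeIdx n | f ≠ e ∧ ¬ D.Adj e f}, MeasurableSpace.comap (X f) ⊤)
      m μ

attribute [instance] DepRandomGraph.m DepRandomGraph.isProb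

def DepRandomGraph.graph {n : ℕ} {p : ℝ} {d : ℕ} (G : DepRandomGraph n p d) (ω : G.Ω) :
    SimpleGraph (Fin n) :=
  SimpleGraph.fromEdgeSet {e : Sym2 (Fin n) | ∃ h : ¬ e.IsDiag, G.X ⟨e, h⟩ ω = true}

noncomputable def DepRandomGraph.deg {n : ℕ} {p : ℝ} {d : ℕ} (G : DepRandomGraph n p d)
    (ω : G.Ω) (v : Fin n) : ℕ :=
  {u | (G.graph ω).Adj v u}.ncard

noncomputable def DepRandomGraph.eAB {n : ℕ} {p : ℝ} {d : ℕ} (G : DepRandomGraph n p d)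
    (ω : G.Ω) (A B : Finset (Fin n)) : ℕ :=
  {q : Fin n × Fin n | q.1 ∈ A ∧ q.2 ∈ B ∧ (G.graph ω).Adj q.1 q.2}.ncard

def ContainsCopy {n : ℕ} {α : Type*} (G' : SimpleGraph (Fin n)) (H : SimpleGraph α) : Prop :=
  ∃ f : α → Fin n, Function.Injective f ∧ ∀ u v, H.Adj u v → G'.Adj (f u) (f v)

/-- The number of vertices covered by a finite set of edges. -/
noncomputable def edgeVertCount {α : Type*} (Γ : Finset (Sym2 α)) : ℕ :=
  {v : α | ∃ e ∈ Γ, v ∈ e}.ncard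

/-- The edge cover number of a finite set of edges: the minimum size of a subset `A ⊆ Γ`
such that every edge of `Γ` shares an endpoint with some edge of `A`. -/
noncomputable def coverNum {α : Type*} (Γ : Finset (Sym2 α)) : ℕ :=
  sInf {k : ℕ | ∃ A ⊆ Γ, A.card = k ∧ ∀ e ∈ Γ, ∃ a ∈ A, ∃ v : α, v ∈ e ∧ v ∈ a}



lemma exists_indep_subset {V : Type*} [Fintype V] (D : SimpleGraph V) (d : ℕ)
    (hd : ∀ v, (D.neighborSet v).ncard ≤ d) (T : Finset V) :
    ∃ I ⊆ T, (∀ a ∈ I, ∀ b ∈ I, ¬ D.Adj a b) ∧ T.card ≤ (d + 1) * I.card := by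
  classical
  induction T using Finset.strongInduction with
  | _ T ih =>
    rcases T.eq_empty_or_nonempty with rfl | ⟨e, he⟩
    · exact ⟨∅, by simp⟩
    · set R : Finset V := T.filter (fun f => f = e ∨ D.Adj e f) with hR
      have hRT : R ⊆ T := Finset.filter_subset _ _
      have heR : e ∈ R := by simp [hR, he]
      obtain ⟨I, hIsub, hIindep, hIcard⟩ := ih (T \ R) (Finset.sdiff_ssubset hRT ⟨e, heR⟩)
      have heI : e ∉ I := fun h => (Finset.mem_sdiff.1 (hIsub h)).2 heR
      refine ⟨insert e I, ?_, ?_, ?_⟩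
      · intro a ha
        rcases Finset.mem_insert.1 ha with rfl | ha
        · exact he
        · exact (Finset.mem_sdiff.1 (hIsub ha)).1
      · intro a ha b hb hadj
        have key : ∀ f ∈ I, ¬ D.Adj e f := by
          intro f hf hadj
          exact (Finset.mem_sdiff.1 (hIsub hf)).2 (by simp [hR, (Finset.mem_sdiff.1 (hIsub hf)).1, hadj])
        rcases Finset.mem_insert.1 ha with hae | haI
        · rcases Finset.mem_insert.1 hb with hbe | hbI
          · subst hae; subst hbe; exact D.loopless.irrefl _ hadj
          · subst hae; exact key b hbI hadj
        · rcases Finset.mem_insert.1 hb with hbe | hbI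
          · subst hbe; exact key a haI hadj.symm
          · exact hIindep a haI b hbI hadj
      · have hRcard : R.card ≤ d + 1 := by
          have hsub : R ⊆ insert e (D.neighborSet e).toFinset := by
            intro f hf
            rcases (Finset.mem_filter.1 hf).2 with rfl | hadj
            · exact Finset.mem_insert_self _ _
            · exact Finset.mem_insert_of_mem (by simpa using hadj)
          calc R.card ≤ _ := Finset.card_le_card hsub
            _ ≤ (D.neighborSet e).toFinset.card + 1 := Finset.card_insert_le _ _
            _ ≤ d + 1 := by
                have := hd e
                rw [Set.ncard_eq_toFinset_card'] at this
                omega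
        have := Finset.card_sdiff_add_card_eq_card hRT
        rw [Finset.card_insert_of_notMem heI]
        have expand : (d + 1) * (I.card + 1) = (d + 1) * I.card + (d + 1) := by ring
        omega

lemma measure_biInter_indep {n : ℕ} {p : ℝ} {d : ℕ} (G : DepRandomGraph n p d)
    (I : Finset (EdgeIdx n)) (hI : ∀ a ∈ I, ∀ b ∈ I, ¬ G.D.Adj a b) :
    G.μ (⋂ e ∈ I, {ω | G.X e ω = true}) = ENNReal.ofReal p ^ I.card := by
  classical
  induction I using Finset.induction_on with
  | empty => simp
  | @insert e I' he ihind =>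
    have hrest : ∀ a ∈ I', ∀ b ∈ I', ¬ G.D.Adj a b := fun a ha b hb =>
      hI a (Finset.mem_insert_of_mem ha) b (Finset.mem_insert_of_mem hb)
    have hmem : ∀ f ∈ I', f ∈ {f : EdgeIdx n | f ≠ e ∧ ¬ G.D.Adj e f} := by
      intro f hf
      exact ⟨fun h => he (h ▸ hf), hI e (Finset.mem_insert_self _ _) f (Finset.mem_insert_of_mem hf)⟩
    have h1 : MeasurableSet[MeasurableSpace.comap (G.X e) ⊤] {ω | G.X e ω = true} :=
      ⟨{true}, trivial, rfl⟩
    have h2 : MeasurableSet[⨆ f ∈ {f : EdgeIdx n | f ≠ e ∧ ¬ G.D.Adj e f},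
        MeasurableSpace.comap (G.X f) ⊤] (⋂ f ∈ I', {ω | G.X f ω = true}) := by
      refine MeasurableSet.biInter I'.countable_toSet (fun f hf => ?_)
      have hle : MeasurableSpace.comap (G.X f) ⊤ ≤
          ⨆ f ∈ {f : EdgeIdx n | f ≠ e ∧ ¬ G.D.Adj e f}, MeasurableSpace.comap (G.X f) ⊤ :=
        le_biSup (fun f => MeasurableSpace.comap (G.X f) ⊤) (hmem f hf)
      exact hle _ ⟨{true}, trivial, rfl⟩
    have := (ProbabilityTheory.Indep_iff _ _ _).1 (G.indep e) _ _ h1 h2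
    rw [Finset.set_biInter_insert, this, G.probX e, ihind hrest,
      Finset.card_insert_of_notMem he, pow_succ, mul_comm]

noncomputable def edgesIn {n : ℕ} (s : Finset (Fin n)) : Finset (EdgeIdx n) := by
  classical exact Finset.univ.filter (fun e => ∀ v ∈ e.1, v ∈ s)

lemma mem_edgesIn {n : ℕ} {s : Finset (Fin n)} {e : EdgeIdx n} :
    e ∈ edgesIn s ↔ ∀ v ∈ e.1, v ∈ s := by
  classical simp [edgesIn]

lemma clique_event_eq {n : ℕ} {p : ℝ} {d : ℕ} (G : DepRandomGraph n p d) (s : Finset (Fin n)) :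
    {ω | (G.graph ω).IsClique (↑s : Set (Fin n))} = ⋂ e ∈ edgesIn s, {ω | G.X e ω = true} := by
  ext ω
  simp only [Set.mem_setOf_eq, Set.mem_iInter]
  constructor
  · intro hcl e he
    obtain ⟨q, hq⟩ := e
    induction q using Sym2.ind with
    | _ u v =>
      have hne : u ≠ v := fun h => hq (by simp [h])
      have hu : u ∈ s := mem_edgesIn.1 he u (Sym2.mem_mk_left u v)
      have hv : v ∈ s := mem_edgesIn.1 he v (Sym2.mem_mk_right u v)
      have hadj : (G.graph ω).Adj u v := hcl hu hv hne
      rw [DepRandomGraph.graph, SimpleGraph.fromEdgeSet_adj] at hadj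
      obtain ⟨⟨h', hX⟩, -⟩ := hadj
      exact hX
  · intro hX u hu v hv hne
    have hq : ¬ (s(u, v) : Sym2 (Fin n)).IsDiag := by simp [hne]
    have he : (⟨s(u, v), hq⟩ : EdgeIdx n) ∈ edgesIn s := by
      rw [mem_edgesIn]
      intro w hw
      rcases Sym2.mem_iff.1 hw with rfl | rfl
      · exact hu
      · exact hv
    rw [DepRandomGraph.graph, SimpleGraph.fromEdgeSet_adj]
    exact ⟨⟨hq, hX _ he⟩, hne⟩

lemma card_edgesIn {n : ℕ} (s : Finset (Fin n)) : s.card.choose 2 ≤ (edgesIn s).card := by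
  classical
  have hA : ((edgesIn s).image Subtype.val).card = (edgesIn s).card :=
    Finset.card_image_of_injective _ Subtype.val_injective
  have hle : (⊤ : SimpleGraph ↥s).edgeFinset.card ≤ ((edgesIn s).image Subtype.val).card := by
    apply Finset.card_le_card_of_injOn (Sym2.map Subtype.val)
    · intro q hq
      rw [Finset.mem_coe, SimpleGraph.mem_edgeFinset] at hq
      rw [Finset.mem_coe]
      induction q using Sym2.ind with
      | _ a b =>
        have hab : a ≠ b := (SimpleGraph.mem_edgeSet _).1 hq |>.ne
        have hdiag : ¬ (Sym2.map Subtype.val s(a, b)).IsDiag := by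
          simp only [Sym2.map_pair_eq, Sym2.mk_isDiag_iff]
          exact fun h => hab (Subtype.val_injective h)
        refine Finset.mem_image.2 ⟨⟨Sym2.map Subtype.val s(a, b), hdiag⟩, ?_, rfl⟩
        rw [mem_edgesIn]
        intro w hw
        simp only [Sym2.map_pair_eq] at hw
        rcases Sym2.mem_iff.1 hw with rfl | rfl
        · exact a.2
        · exact b.2
    · exact (Sym2.map.injective Subtype.val_injective).injOn
  calc s.card.choose 2 = (Fintype.card ↥s).choose 2 := by rw [Fintype.card_coe]
    _ = (⊤ : SimpleGraph ↥s).edgeFinset.card :=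
        (SimpleGraph.card_edgeFinset_top_eq_card_choose_two).symm
    _ ≤ _ := hle.trans_eq hA

lemma event_measurable {n : ℕ} {p : ℝ} {d : ℕ} (G : DepRandomGraph n p d)
    (s : Finset (Fin n)) :
    MeasurableSet {ω | (G.graph ω).IsClique (↑s : Set (Fin n))} := by
  rw [clique_event_eq]
  refine MeasurableSet.biInter (edgesIn s).countable_toSet (fun e _ => ?_)
  exact G.meas e (show MeasurableSet[⊤] ({true} : Set Bool) from trivial)

lemma prob_clique_le {n : ℕ} {p : ℝ} {d : ℕ} (G : DepRandomGraph n p d) (hp : 0 < p)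
    (hp1 : p ≤ 1) {s : Finset (Fin n)} {k : ℕ} (hs : s.card = k) :
    (G.μ {ω | (G.graph ω).IsClique (↑s : Set (Fin n))}).toReal ≤
      p ^ ((k.choose 2 : ℝ) / ((d : ℝ) + 1)) := by
  obtain ⟨I, hIsub, hIind, hIcard⟩ := exists_indep_subset G.D d G.degBound (edgesIn s)
  have hmono : G.μ {ω | (G.graph ω).IsClique (↑s : Set (Fin n))} ≤
      G.μ (⋂ e ∈ I, {ω | G.X e ω = true}) := by
    rw [clique_event_eq]
    exact measure_mono (Set.biInter_subset_biInter_left (fun e he => hIsub he))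
  have hval := measure_biInter_indep G I hIind
  have hIN : k.choose 2 ≤ (d + 1) * I.card := le_trans (hs ▸ card_edgesIn s) hIcard
  have h1 : G.μ {ω | (G.graph ω).IsClique (↑s : Set (Fin n))} ≤
      ENNReal.ofReal (p ^ I.card) := by
    rw [ENNReal.ofReal_pow hp.le]; exact hmono.trans_eq hval
  have h2 : (G.μ {ω | (G.graph ω).IsClique (↑s : Set (Fin n))}).toReal ≤ p ^ I.card := by
    have := ENNReal.toReal_mono ENNReal.ofReal_ne_top h1
    rwa [ENNReal.toReal_ofReal (by positivity)] at this
  refine h2.trans ?_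
  rw [← Real.rpow_natCast p I.card]
  apply Real.rpow_le_rpow_of_exponent_ge hp hp1
  rw [div_le_iff₀ (by positivity)]
  calc (k.choose 2 : ℝ) ≤ ((d + 1) * I.card : ℕ) := by exact_mod_cast hIN
    _ = (I.card : ℝ) * ((d : ℝ) + 1) := by push_cast; ring
/-- **Expected number of cliques.** For any `d`-dependent random graph distribution with
`p > 0` and any `k ≥ 2`, the expected number of `k`-cliques is at most
`C(n,k) · p^(C(k,2)/(d+1))` (real exponent). -/
theorem expected_clique_count {n : ℕ} {p : ℝ} {d : ℕ} (G : DepRandomGraph n p d) (hp : 0 < p)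
    (k : ℕ) (hk : 2 ≤ k) :
    (∫ ω, ({s : Finset (Fin n) | s.card = k ∧
        (G.graph ω).IsClique (↑s : Set (Fin n))}.ncard : ℝ) ∂G.μ) ≤
      (n.choose k : ℝ) * p ^ ((k.choose 2 : ℝ) / ((d : ℝ) + 1)) := by
  classical
  set c : ℝ := p ^ ((k.choose 2 : ℝ) / ((d : ℝ) + 1)) with hc
  set Fk : Finset (Finset (Fin n)) := Finset.univ.filter (fun s => s.card = k) with hFk
  have hcount : ∀ ω : G.Ω, ({s : Finset (Fin n) | s.card = k ∧
      (G.graph ω).IsClique (↑s : Set (Fin n))}.ncard : ℝ)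
      = ∑ s ∈ Fk, Set.indicator {ω' | (G.graph ω').IsClique (↑s : Set (Fin n))}
          (fun _ => (1 : ℝ)) ω := by
    intro ω
    have h1 : ∀ s ∈ Fk, Set.indicator {ω' | (G.graph ω').IsClique (↑s : Set (Fin n))}
        (fun _ => (1 : ℝ)) ω = if (G.graph ω).IsClique (↑s : Set (Fin n)) then (1:ℝ) else 0 := by
      intro s _
      simp [Set.indicator_apply]
    rw [Finset.sum_congr rfl h1, Finset.sum_boole, hFk, Finset.filter_filter]
    rw [Set.ncard_eq_toFinset_card', Set.toFinset_setOf]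
  have hint : (∫ ω, ({s : Finset (Fin n) | s.card = k ∧
        (G.graph ω).IsClique (↑s : Set (Fin n))}.ncard : ℝ) ∂G.μ)
      = ∑ s ∈ Fk, (G.μ {ω | (G.graph ω).IsClique (↑s : Set (Fin n))}).toReal := by
    rw [funext hcount, MeasureTheory.integral_finset_sum _
      (fun s _ => (MeasureTheory.integrable_const (1:ℝ)).indicator (event_measurable G s))]
    refine Finset.sum_congr rfl (fun s _ => ?_)
    exact MeasureTheory.integral_indicator_one (event_measurable G s)
  rw [hint]
  by_cases hkn : k ≤ n
  · have hp1 : p ≤ 1 := by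
      have h2n : 2 ≤ n := le_trans hk hkn
      have hdiag : ¬ (s((⟨0, by omega⟩ : Fin n), (⟨1, by omega⟩ : Fin n))).IsDiag := by
        simp [Sym2.mk_isDiag_iff, Fin.ext_iff]
      have hpe := G.probX ⟨_, hdiag⟩
      have hle : G.μ {ω | G.X ⟨_, hdiag⟩ ω = true} ≤ 1 := prob_le_one
      rw [hpe] at hle
      exact ENNReal.ofReal_le_one.1 hle
    have hcard : Fk.card = n.choose k := by
      have : Fk = Finset.powersetCard k Finset.univ := by
        ext t
        simp [hFk, Finset.mem_powersetCard]
      rw [this, Finset.card_powersetCard, Finset.card_univ, Fintype.card_fin]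
    calc ∑ s ∈ Fk, (G.μ {ω | (G.graph ω).IsClique (↑s : Set (Fin n))}).toReal
        ≤ ∑ _s ∈ Fk, c := Finset.sum_le_sum (fun s hs =>
          prob_clique_le G hp hp1 ((Finset.mem_filter.1 hs).2))
      _ = (Fk.card : ℝ) * c := by rw [Finset.sum_const, nsmul_eq_mul]
      _ = (n.choose k : ℝ) * c := by rw [hcard]
  · have hFke : Fk = ∅ := by
      rw [hFk, Finset.filter_eq_empty_iff]
      intro s _ hsk
      exact hkn (hsk ▸ (s.card_le_univ.trans_eq (by simp)))
    rw [hFke, Finset.sum_empty]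
    exact mul_nonneg (by positivity) (Real.rpow_nonneg hp.le _)
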